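/- Let A be an associative algebra (not necessarily unital) over a field k and M an A-bimodule. Let M_r° (resp. M_l°) be the set of f ∈ M* vanishing on some right (resp. left) A-submodule of M of finite codimension, and set M° = M_l° ∩ M_r°. Then for every f ∈ M° there exist finitely many f_i ∈ M°, g_i ∈ A° with f(xa) = Σ f_i(x)g_i(a) for all x ∈ M, a ∈ A, and finitely many l_i ∈ A°, h_i ∈ M° with f(ax) = Σ l_i(a)h_i(x) for all a ∈ A, x ∈ M; moreover (M°, ρ_l, ρ_r) is an A°-bicomodule, i.e. (ρ_l⊗id)ρ_r = (id⊗ρ_r)ρ_l on M°, where ρ_l and ρ_r are the restrictions of the duals of the left and right action maps. -/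

import Mathlib

section

variable {k : Type} [Field k]

/-- The finite dual `A°` of a (not necessarily unital) algebra `A`. -/
def finDual (k : Type) [Field k] (A : Type) [NonUnitalRing A] [Module k A]
    [SMulCommClass k A A] [IsScalarTower k A A] : Set (Module.Dual k A) :=
  {f | ∃ R : Submodule k A, (∀ x ∈ R, ∀ a : A, x * a ∈ R) ∧
        FiniteDimensional k (A ⧸ R) ∧ ∀ x ∈ R, f x = 0}

/-- The finite dual `M_r°` of a right `A`-module with action `μ`. -/
def finDualModR {A M : Type} [NonUnitalRing A] [Module k A]
    [SMulCommClass k A A] [IsScalarTower k A A] [AddCommGroup M] [Module k M]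
    (μ : M →ₗ[k] A →ₗ[k] M) : Set (Module.Dual k M) :=
  {f | ∃ N : Submodule k M, (∀ x ∈ N, ∀ a : A, μ x a ∈ N) ∧
        FiniteDimensional k (M ⧸ N) ∧ ∀ x ∈ N, f x = 0}

/-- The finite dual `M_l°` of a left `A`-module with action `lμ`. -/
def finDualModL {A M : Type} [NonUnitalRing A] [Module k A]
    [SMulCommClass k A A] [IsScalarTower k A A] [AddCommGroup M] [Module k M]
    (lμ : A →ₗ[k] M →ₗ[k] M) : Set (Module.Dual k M) :=
  {f | ∃ N : Submodule k M, (∀ x ∈ N, ∀ a : A, lμ a x ∈ N) ∧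
        FiniteDimensional k (M ⧸ N) ∧ ∀ x ∈ N, f x = 0}

/-- If `M ⧸ N` is finite dimensional, so is `M ⧸ g⁻¹(N)`. -/
lemma fdQuotComap {M : Type} [AddCommGroup M] [Module k M] (g : M →ₗ[k] M)
    (N : Submodule k M) (hN : FiniteDimensional k (M ⧸ N)) :
    FiniteDimensional k (M ⧸ Submodule.comap g N) := by
  haveI := hN
  refine FiniteDimensional.of_injective
    (Submodule.mapQ (N.comap g) N g fun x hx => hx) ?_
  rw [← LinearMap.ker_eq_bot, eq_bot_iff]
  rintro x hx
  obtain ⟨y, rfl⟩ := Submodule.Quotient.mk_surjective _ x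
  rw [LinearMap.mem_ker, Submodule.mapQ_apply, Submodule.Quotient.mk_eq_zero] at hx
  simpa [Submodule.Quotient.mk_eq_zero] using hx

/-- The "annihilator" of a finite-codimensional invariant subspace is a right ideal of
finite codimension. -/
lemma ker_aux {A M : Type} [NonUnitalRing A] [Module k A]
    [SMulCommClass k A A] [IsScalarTower k A A] [AddCommGroup M] [Module k M]
    (ρ : A →ₗ[k] M →ₗ[k] M) (N : Submodule k M)
    (hstab : ∀ a : A, ∀ x ∈ N, ρ a x ∈ N) (hfd : FiniteDimensional k (M ⧸ N))
    (hmul : ∀ a b : A, (∀ x : M, ρ a x ∈ N) → ∀ x : M, ρ (a * b) x ∈ N) :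
    ∃ R : Submodule k A, (∀ a ∈ R, ∀ b : A, a * b ∈ R) ∧
      FiniteDimensional k (A ⧸ R) ∧ ∀ a ∈ R, ∀ x : M, ρ a x ∈ N := by
  haveI := hfd
  let ψ : A →ₗ[k] ((M ⧸ N) →ₗ[k] (M ⧸ N)) :=
    { toFun := fun a => Submodule.mapQ N N (ρ a) (fun x hx => hstab a x hx)
      map_add' := fun a b => by
        refine Submodule.linearMap_qext _ ?_
        ext y
        simp [Submodule.mapQ_apply]
      map_smul' := fun c a => by
        refine Submodule.linearMap_qext _ ?_
        ext y
        simp [Submodule.mapQ_apply] }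
  have hψ : ∀ a, a ∈ LinearMap.ker ψ ↔ ∀ x : M, ρ a x ∈ N := by
    intro a
    constructor
    · intro ha x
      have := LinearMap.congr_fun (LinearMap.mem_ker.mp ha) (Submodule.Quotient.mk x)
      rwa [show ψ a = Submodule.mapQ N N (ρ a) (fun x hx => hstab a x hx) from rfl,
        Submodule.mapQ_apply, LinearMap.zero_apply, Submodule.Quotient.mk_eq_zero] at this
    · intro ha
      rw [LinearMap.mem_ker]
      refine Submodule.linearMap_qext _ ?_
      ext y
      show Submodule.mapQ N N (ρ a) (fun x hx => hstab a x hx) (Submodule.Quotient.mk y) = 0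
      rw [Submodule.mapQ_apply, Submodule.Quotient.mk_eq_zero]
      exact ha y
  refine ⟨LinearMap.ker ψ, ?_, ?_, fun a ha => (hψ a).mp ha⟩
  · intro a ha b
    rw [hψ] at ha ⊢
    exact hmul a b ha
  · exact Module.Finite.equiv (LinearMap.quotKerEquivRange ψ).symm

/-- The key decomposition lemma. -/
lemma finDual_decomp {A M : Type} [NonUnitalRing A] [Module k A]
    [SMulCommClass k A A] [IsScalarTower k A A] [AddCommGroup M] [Module k M]
    (Φ : A →ₗ[k] Module.Dual k M) (S : Set (Module.Dual k M))
    (hS : ∀ a, Φ a ∈ S)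
    (hfd : FiniteDimensional k (LinearMap.range Φ))
    (R : Submodule k A) (hRideal : ∀ x ∈ R, ∀ a : A, x * a ∈ R)
    (hRfd : FiniteDimensional k (A ⧸ R)) (hRker : ∀ a ∈ R, Φ a = 0) :
    ∃ (n : ℕ) (g : Fin n → Module.Dual k M) (h : Fin n → Module.Dual k A),
      (∀ i, g i ∈ S ∧ h i ∈ finDual k A) ∧
      ∀ (x : M) (a : A), Φ a x = ∑ i, g i x * h i a := by
  classical
  haveI := hfd
  haveI : Module.Free k (LinearMap.range Φ) :=
    Module.Free.of_divisionRing k (LinearMap.range Φ)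
  let b := Module.finBasis k (LinearMap.range Φ)
  refine ⟨Module.finrank k (LinearMap.range Φ),
    fun i => ((b i : Module.Dual k M)),
    fun i => (b.coord i).comp Φ.rangeRestrict, fun i => ?_, fun x a => ?_⟩
  · constructor
    · obtain ⟨a, ha⟩ := (b i).2
      show ((b i : Module.Dual k M)) ∈ S
      rw [← ha]; exact hS a
    · refine ⟨R, hRideal, hRfd, fun a ha => ?_⟩
      have : Φ.rangeRestrict a = 0 := by
        ext; simp [LinearMap.rangeRestrict, hRker a ha]
      simp [this]
  · have hw : ((Φ.rangeRestrict a : LinearMap.range Φ) : Module.Dual k M) = Φ a := rfl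
    conv_lhs => rw [← hw, ← b.sum_repr (Φ.rangeRestrict a)]
    rw [Submodule.coe_sum]
    simp only [LinearMap.coe_sum, Finset.sum_apply, SetLike.val_smul, LinearMap.smul_apply,
      smul_eq_mul, LinearMap.coe_comp, Function.comp_apply, Module.Basis.coord_apply]
    exact Finset.sum_congr rfl fun i _ => mul_comm _ _

/-- **Proposition 3.9.** Let `M` be an `A`-bimodule and `M° = M_l° ∩ M_r°`. For every
`f ∈ M°` the functional `f(x a)` is `Σ f_i(x) g_i(a)` with `f_i ∈ M°`, `g_i ∈ A°`, and
`f(a x)` is `Σ l_i(a) h_i(x)` with `l_i ∈ A°`, `h_i ∈ M°`; moreover `(M°, ρ_l, ρ_r)` is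
an `A°`-bicomodule: `(ρ_l ⊗ id) ρ_r = (id ⊗ ρ_r) ρ_l`. -/
theorem finDual_bimodule_bicomodule {A M : Type} [NonUnitalRing A] [Module k A]
    [SMulCommClass k A A] [IsScalarTower k A A] [AddCommGroup M] [Module k M]
    (lμ : A →ₗ[k] M →ₗ[k] M) (rμ : M →ₗ[k] A →ₗ[k] M)
    (hl : ∀ (a b : A) (x : M), lμ (a * b) x = lμ a (lμ b x))
    (hr : ∀ (x : M) (a b : A), rμ (rμ x a) b = rμ x (a * b))
    (hlr : ∀ (a : A) (x : M) (b : A), lμ a (rμ x b) = rμ (lμ a x) b)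
    (f : Module.Dual k M)
    (hf : f ∈ finDualModL lμ ∩ finDualModR rμ) :
    (∃ (n : ℕ) (g : Fin n → Module.Dual k M) (h : Fin n → Module.Dual k A),
      (∀ i, g i ∈ finDualModL lμ ∩ finDualModR rμ ∧ h i ∈ finDual k A) ∧
      ∀ (x : M) (a : A), f (rμ x a) = ∑ i, g i x * h i a) ∧
    (∃ (m : ℕ) (u : Fin m → Module.Dual k A) (v : Fin m → Module.Dual k M),
      (∀ i, u i ∈ finDual k A ∧ v i ∈ finDualModL lμ ∩ finDualModR rμ) ∧
      ∀ (a : A) (x : M), f (lμ a x) = ∑ i, u i a * v i x) ∧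
    ∀ (a : A) (x : M) (b : A), f (lμ a (rμ x b)) = f (rμ (lμ a x) b) := by
  obtain ⟨⟨Nl, hNls, hNlf, hNlv⟩, ⟨Nr, hNrs, hNrf, hNrv⟩⟩ := hf
  haveI := hNlf; haveI := hNrf
  refine ⟨?_, ?_, fun a x b => congrArg f (hlr a x b)⟩
  · -- right-hand decomposition
    set Φ : A →ₗ[k] Module.Dual k M := (LinearMap.llcomp k M M k f).comp rμ.flip with hΦdef
    have hΦ : ∀ (a : A) (x : M), Φ a x = f (rμ x a) := fun a x => rfl
    have hS : ∀ a, Φ a ∈ finDualModL lμ ∩ finDualModR rμ := by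
      intro a
      constructor
      · refine ⟨Submodule.comap (rμ.flip a) Nl, ?_, ?_, fun x hx => hNlv _ hx⟩
        · intro x hx b
          show rμ (lμ b x) a ∈ Nl
          rw [← hlr]
          exact hNls _ hx b
        · exact fdQuotComap (rμ.flip a) Nl hNlf
      · exact ⟨Nr, hNrs, hNrf, fun x hx => hNrv _ (hNrs x hx a)⟩
    have hle : LinearMap.range Φ ≤ Nr.dualAnnihilator := by
      rintro _ ⟨a, rfl⟩
      rw [Submodule.mem_dualAnnihilator]
      intro x hx
      exact hNrv _ (hNrs x hx a)
    haveI : FiniteDimensional k (Nr.dualAnnihilator) :=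
      LinearEquiv.finiteDimensional (Submodule.dualQuotEquivDualAnnihilator Nr)
    have hfd : FiniteDimensional k (LinearMap.range Φ) :=
      Submodule.finiteDimensional_of_le hle
    obtain ⟨R, hRideal, hRfd, hRmem⟩ := ker_aux rμ.flip Nr (fun a x hx => hNrs x hx a) hNrf
      (fun a b ha x => by
        show rμ x (a * b) ∈ Nr
        rw [← hr]
        exact hNrs _ (ha x) b)
    obtain ⟨n, g, h, hmem, heq⟩ := finDual_decomp Φ _ hS hfd R hRideal hRfd
      (fun a ha => LinearMap.ext fun x => hNrv _ (hRmem a ha x))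
    exact ⟨n, g, h, hmem, fun x a => heq x a⟩
  · -- left-hand decomposition
    set Ψ : A →ₗ[k] Module.Dual k M := (LinearMap.llcomp k M M k f).comp lμ with hΨdef
    have hΨ : ∀ (a : A) (x : M), Ψ a x = f (lμ a x) := fun a x => rfl
    have hS : ∀ a, Ψ a ∈ finDualModL lμ ∩ finDualModR rμ := by
      intro a
      constructor
      · exact ⟨Nl, hNls, hNlf, fun x hx => hNlv _ (hNls x hx a)⟩
      · refine ⟨Submodule.comap (lμ a) Nr, ?_, ?_, fun x hx => hNrv _ hx⟩
        · intro x hx b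
          show lμ a (rμ x b) ∈ Nr
          rw [hlr]
          exact hNrs _ hx b
        · exact fdQuotComap (lμ a) Nr hNrf
    have hle : LinearMap.range Ψ ≤ Nl.dualAnnihilator := by
      rintro _ ⟨a, rfl⟩
      rw [Submodule.mem_dualAnnihilator]
      intro x hx
      exact hNlv _ (hNls x hx a)
    haveI : FiniteDimensional k (Nl.dualAnnihilator) :=
      LinearEquiv.finiteDimensional (Submodule.dualQuotEquivDualAnnihilator Nl)
    have hfd : FiniteDimensional k (LinearMap.range Ψ) :=
      Submodule.finiteDimensional_of_le hle
    obtain ⟨R, hRideal, hRfd, hRmem⟩ := ker_aux lμ Nl (fun a x hx => hNls x hx a) hNlf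
      (fun a b ha x => by rw [hl]; exact ha _)
    obtain ⟨n, g, h, hmem, heq⟩ := finDual_decomp Ψ _ hS hfd R hRideal hRfd
      (fun a ha => LinearMap.ext fun x => hNlv _ (hRmem a ha x))
    refine ⟨n, h, g, fun i => ⟨(hmem i).2, (hmem i).1⟩, fun a x => ?_⟩
    rw [show f (lμ a x) = Ψ a x from rfl, heq x a]
    exact Finset.sum_congr rfl fun i _ => mul_comm _ _

end
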